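/- arXiv:1401.3935 — 3 statements merged into one kernel-verified Lean document; each statement's English description precedes it below -/
import Mathlib

section
/- Let Ḡ = (G, ω) be a vertex-weighted graph having a bridge e with endpoints v1, v2; let G1, G2 be the connected components of G minus e (v_i ∈ G_i) with restricted weight functions, let d ∈ Div(G) and let d_i be the restriction of d to G_i. Then r_Ḡ(d) ≤ r_Ḡ1(d1) + r_Ḡ2(d2) + 1 if v_i is a base-point of |d_i|• for both i = 1, 2, and r_Ḡ(d) ≤ r_Ḡ1(d1) + r_Ḡ2(d2) otherwise. -/
open scoped Classical

namespace BN

/-- A finite multigraph: `E u v` is the number of edges (other than loops)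
between distinct vertices `u` and `v`, and `loops v` is the number of loops at `v`. -/
structure MultiGraph (V : Type) where
  E : V → V → ℕ
  loops : V → ℕ
  symm : ∀ u v, E u v = E v u
  noDiag : ∀ v, E v v = 0

variable {V V1 V2 : Type}

/-- The divisor `[v]`. -/
def one [DecidableEq V] (v : V) : V → ℤ := fun w => if w = v then 1 else 0

/-- Degree of a divisor. -/
def deg [Fintype V] (d : V → ℤ) : ℤ := ∑ v, d v

/-- Effective divisor. -/
def Effective (d : V → ℤ) : Prop := ∀ v, 0 ≤ d v

namespace MultiGraph

/-- Divisor of a rational function (loops contribute nothing). -/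
def div [Fintype V] (G : MultiGraph V) (f : V → ℤ) : V → ℤ :=
  fun v => ∑ w, (G.E v w : ℤ) * (f w - f v)

def Principal [Fintype V] (G : MultiGraph V) (d : V → ℤ) : Prop :=
  ∃ f : V → ℤ, d = G.div f

def LinEquiv [Fintype V] (G : MultiGraph V) (d d' : V → ℤ) : Prop :=
  G.Principal (d' - d)

/-- `d` is linearly equivalent to an effective divisor. -/
def Winnable [Fintype V] (G : MultiGraph V) (d : V → ℤ) : Prop :=
  ∃ e : V → ℤ, Effective e ∧ G.LinEquiv d e

/-- The Baker–Norine rank of a divisor. -/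
noncomputable def rank [Fintype V] (G : MultiGraph V) (d : V → ℤ) : ℤ :=
  if G.Winnable d then
    (sSup {s : ℕ | ∀ e : V → ℤ, Effective e → deg e = (s : ℤ) → G.Winnable (d - e)} : ℕ)
  else -1

def Connected (G : MultiGraph V) : Prop :=
  ∀ u v : V, Relation.ReflTransGen (fun a b => 0 < G.E a b) u v

def Loopless (G : MultiGraph V) : Prop := ∀ v, G.loops v = 0

/-- Number of edges from `v` to vertices outside `A`. -/
def outdeg [Fintype V] [DecidableEq V] (G : MultiGraph V) (A : Finset V) (v : V) : ℕ :=
  ∑ w ∈ Finset.univ.filter (fun w => w ∉ A), G.E v w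

/-- `v0`-reduced divisor. -/
def Reduced [Fintype V] [DecidableEq V] (G : MultiGraph V) (v0 : V) (d : V → ℤ) : Prop :=
  (∀ v, v ≠ v0 → 0 ≤ d v) ∧
  ∀ A : Finset V, A.Nonempty → v0 ∉ A → ∃ v ∈ A, d v < (G.outdeg A v : ℤ)

def valence [Fintype V] (G : MultiGraph V) (v : V) : ℕ :=
  (∑ w, G.E v w) + 2 * G.loops v

/-- Canonical divisor. -/
def K [Fintype V] (G : MultiGraph V) : V → ℤ := fun v => (G.valence v : ℤ) - 2

def edgeCount [Fintype V] (G : MultiGraph V) : ℕ :=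
  (∑ v, ∑ w, G.E v w) / 2 + ∑ v, G.loops v

end MultiGraph

open MultiGraph

/-- The graph obtained by joining `G1` and `G2` by a single bridge from `v1` to `v2`. -/
def bridgeJoin [DecidableEq V1] [DecidableEq V2]
    (G1 : MultiGraph V1) (G2 : MultiGraph V2) (v1 : V1) (v2 : V2) :
    MultiGraph (V1 ⊕ V2) where
  E x y :=
    match x, y with
    | .inl a, .inl b => G1.E a b
    | .inr a, .inr b => G2.E a b
    | .inl a, .inr b => if a = v1 ∧ b = v2 then 1 else 0
    | .inr b, .inl a => if a = v1 ∧ b = v2 then 1 else 0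
  loops := Sum.elim G1.loops G2.loops
  symm := by rintro (a | a) (b | b) <;> simp [G1.symm, G2.symm]
  noDiag := by rintro (a | a) <;> simp [G1.noDiag, G2.noDiag]

/-- The virtual loopless graph `Ḡ•` of a vertex-weighted graph `(G, ω)`:
insert a vertex into each loop of `G` and add `ω v` subdivided loops at each `v`.
The inserted vertices are the pairs `⟨v, i⟩` with `i : Fin (G.loops v + ω v)`,
each joined to `v` by two parallel edges. -/
noncomputable def bullet (G : MultiGraph V) (ω : V → ℕ) :
    MultiGraph (V ⊕ (Σ v : V, Fin (G.loops v + ω v))) where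
  E x y :=
    match x, y with
    | .inl u, .inl v => G.E u v
    | .inl u, .inr w => if u = w.1 then 2 else 0
    | .inr w, .inl u => if u = w.1 then 2 else 0
    | .inr _, .inr _ => 0
  loops := fun _ => 0
  symm := by rintro (u | u) (v | v) <;> simp [G.symm]
  noDiag := by rintro (v | v) <;> simp [G.noDiag]

/-- The rank `r_Ḡ(d)` of a divisor on a vertex-weighted graph `(G, ω)`:
the Baker–Norine rank of `d` on `Ḡ•`. -/
noncomputable def wrank [Fintype V] [DecidableEq V] (G : MultiGraph V) (ω : V → ℕ)
    (d : V → ℤ) : ℤ :=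
  (bullet G ω).rank (Sum.elim d 0)

/-- `v` is a base-point of the complete linear system `|d|•` on `Ḡ•`. -/
def wBasePoint [Fintype V] [DecidableEq V] (G : MultiGraph V) (ω : V → ℕ)
    (d : V → ℤ) (v : V) : Prop :=
  wrank G ω (d - one v) = wrank G ω d

/-- Genus of a vertex-weighted graph. -/
def genus [Fintype V] (G : MultiGraph V) (ω : V → ℕ) : ℤ :=
  (G.edgeCount : ℤ) - Fintype.card V + 1 + ∑ v, (ω v : ℤ)

/-- A vertex-weighted graph of genus `≥ 2` is hyperelliptic if `Ḡ•` carries a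
divisor of degree `2` and rank `1`. -/
def Hyperelliptic [Fintype V] [DecidableEq V] (G : MultiGraph V) (ω : V → ℕ) : Prop :=
  2 ≤ genus G ω ∧ ∃ d, deg d = 2 ∧ (bullet G ω).rank d = 1

/-- The canonical divisor `K_Ḡ` of a vertex-weighted graph, viewed as a divisor on `G`. -/
noncomputable def wK [Fintype V] (G : MultiGraph V) (ω : V → ℕ) : V → ℤ :=
  fun v => (bullet G ω).K (Sum.inl v)

/-! ### Auxiliary lemmas -/

section Aux

namespace MultiGraph

variable [Fintype V] (G : MultiGraph V)

lemma deg_div (f : V → ℤ) : deg (G.div f) = 0 := by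
  classical
  unfold deg MultiGraph.div
  have h : ∑ v, ∑ w, (G.E v w : ℤ) * (f w - f v)
      = ∑ w, ∑ v, (G.E v w : ℤ) * (f w - f v) := Finset.sum_comm
  have h2 : (∑ v, ∑ w, (G.E v w : ℤ) * (f w - f v)) +
      (∑ v, ∑ w, (G.E v w : ℤ) * (f w - f v)) = 0 := by
    nth_rewrite 2 [h]
    rw [← Finset.sum_add_distrib]
    apply Finset.sum_eq_zero
    intro v _
    rw [← Finset.sum_add_distrib]
    apply Finset.sum_eq_zero
    intro w _
    rw [G.symm w v]
    ring
  omega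

lemma deg_sub (a b : V → ℤ) : deg (a - b) = deg a - deg b := by
  simp [deg, Finset.sum_sub_distrib]

lemma winnable_mono {d d' : V → ℤ} (h : G.Winnable d) (hle : ∀ v, d v ≤ d' v) :
    G.Winnable d' := by
  obtain ⟨e, he, f, hf⟩ := h
  refine ⟨e + (d' - d), fun v => ?_, f, ?_⟩
  · have := he v; have := hle v; simp only [Pi.add_apply, Pi.sub_apply]; omega
  · funext v
    have := congrFun hf v
    simp only [Pi.sub_apply, Pi.add_apply] at this ⊢
    omega

lemma deg_nonneg_of_winnable {d : V → ℤ} (h : G.Winnable d) : 0 ≤ deg d := by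
  obtain ⟨e, he, f, hf⟩ := h
  have hdeg : deg (e - d) = 0 := by rw [hf]; exact deg_div G f
  rw [deg_sub] at hdeg
  have : 0 ≤ deg e := Finset.sum_nonneg fun v _ => he v
  omega

/-- The set whose supremum defines the rank. -/
def rset (d : V → ℤ) : Set ℕ :=
  {s : ℕ | ∀ e : V → ℤ, Effective e → deg e = (s : ℤ) → G.Winnable (d - e)}

lemma rank_eq (d : V → ℤ) :
    G.rank d = if G.Winnable d then ((sSup (G.rset d) : ℕ) : ℤ) else -1 := rfl

lemma deg_smul_one [DecidableEq V] (c : ℤ) (v0 : V) :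
    deg (fun v => c * one v0 v) = c := by
  simp [deg, one, mul_ite, Finset.sum_ite_eq']

lemma effective_smul_one [DecidableEq V] {c : ℤ} (hc : 0 ≤ c) (v0 : V) :
    Effective (fun v => c * one v0 v) := by
  intro v; unfold one; dsimp only; split <;> simp [hc]

lemma eq_zero_of_effective_deg_zero {e : V → ℤ} (he : Effective e) (hd : deg e = 0) :
    e = 0 := by
  funext v
  have := (Finset.sum_eq_zero_iff_of_nonneg (fun w _ => he w)).1 hd v (Finset.mem_univ v)
  simpa using this

lemma zero_mem_rset {d : V → ℤ} (h : G.Winnable d) : 0 ∈ G.rset d := by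
  intro e he hdeg
  have : e = 0 := eq_zero_of_effective_deg_zero he (by simpa using hdeg)
  subst this
  simpa using h

lemma sum_smul_one [DecidableEq V] (c : ℤ) (v0 : V) :
    ∑ v, c * one v0 v = c := by
  simp [one, mul_ite, Finset.sum_ite_eq']

lemma rset_downward [DecidableEq V] [Nonempty V] {d : V → ℤ} {s t : ℕ}
    (hs : s ∈ G.rset d) (hts : t ≤ s) : t ∈ G.rset d := by
  intro e he hdeg
  obtain ⟨v0⟩ := ‹Nonempty V›
  set c : ℤ := (s : ℤ) - (t : ℤ) with hcdef
  have hc : 0 ≤ c := by omega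
  have hone : ∀ v, 0 ≤ c * one v0 v := effective_smul_one hc v0
  have heff : Effective (fun v => e v + c * one v0 v) :=
    fun v => add_nonneg (he v) (hone v)
  have hdeg' : deg (fun v => e v + c * one v0 v) = (s : ℤ) := by
    unfold deg at hdeg ⊢
    rw [Finset.sum_add_distrib, sum_smul_one]
    omega
  have hw := hs _ heff hdeg'
  refine winnable_mono G hw fun v => ?_
  have := hone v
  simp only [Pi.sub_apply]
  omega

lemma rset_bddAbove [Nonempty V] (d : V → ℤ) : BddAbove (G.rset d) := by
  classical
  obtain ⟨v0⟩ := ‹Nonempty V›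
  refine ⟨(deg d).toNat, fun s hs => ?_⟩
  by_contra hlt
  push_neg at hlt
  have hw := hs (fun v => (s : ℤ) * one v0 v)
    (effective_smul_one (by positivity) v0) (deg_smul_one _ _)
  have h0 := deg_nonneg_of_winnable G hw
  rw [deg_sub, deg_smul_one] at h0
  omega

lemma rank_nonneg_of_winnable {d : V → ℤ} (h : G.Winnable d) : 0 ≤ G.rank d := by
  rw [rank_eq, if_pos h]; positivity

lemma winnable_of_rank_nonneg {d : V → ℤ} (h : 0 ≤ G.rank d) : G.Winnable d := by
  by_contra hw
  rw [rank_eq, if_neg hw] at h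
  omega

lemma rank_le_of_unwinnable [Nonempty V] {d e : V → ℤ} (he : Effective e)
    (hw : ¬ G.Winnable (d - e)) : G.rank d ≤ deg e - 1 := by
  classical
  have hdeg : 0 ≤ deg e := Finset.sum_nonneg fun v _ => he v
  by_cases hd : G.Winnable d
  · rw [rank_eq, if_pos hd]
    set N : ℕ := (deg e).toNat with hN
    have hNe : (N : ℤ) = deg e := Int.toNat_of_nonneg hdeg
    have hNnot : N ∉ G.rset d := fun hmem => hw (hmem e he hNe.symm)
    have hlt : ∀ s ∈ G.rset d, s < N := by
      intro s hsmem
      by_contra hge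
      exact hNnot (G.rset_downward hsmem (by omega))
    have hne : (G.rset d).Nonempty := ⟨0, G.zero_mem_rset hd⟩
    have hsup : sSup (G.rset d) < N := hlt _ (Nat.sSup_mem hne (G.rset_bddAbove d))
    omega
  · rw [rank_eq, if_neg hd]
    omega

lemma exists_unwinnable [DecidableEq V] [Nonempty V] (d : V → ℤ) :
    ∃ e : V → ℤ, Effective e ∧ deg e = G.rank d + 1 ∧ ¬ G.Winnable (d - e) := by
  by_cases hd : G.Winnable d
  · have hnn : 0 ≤ G.rank d := G.rank_nonneg_of_winnable hd
    set r := G.rank d with hr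
    have hmem : ((r + 1).toNat) ∉ G.rset d := by
      intro hmem
      have h1 := le_csSup (G.rset_bddAbove d) hmem
      rw [rank_eq, if_pos hd] at hr
      omega
    simp only [rset, Set.mem_setOf_eq, not_forall] at hmem
    obtain ⟨e, he, hdeg, hw⟩ := hmem
    exact ⟨e, he, by rw [hdeg]; omega, hw⟩
  · refine ⟨0, fun v => le_refl 0, ?_, by simpa using hd⟩
    rw [rank_eq, if_neg hd]
    simp [deg]

lemma rank_sub_one_le [DecidableEq V] [Nonempty V] (d : V → ℤ) (v : V) :
    G.rank (d - one v) ≤ G.rank d := by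
  obtain ⟨e, he, hdeg, hw⟩ := G.exists_unwinnable d
  have hw' : ¬ G.Winnable (d - one v - e) := by
    intro h
    refine hw (winnable_mono G h fun w => ?_)
    have : 0 ≤ one v w := by unfold one; split <;> omega
    simp only [Pi.sub_apply]; omega
  have := G.rank_le_of_unwinnable he hw'
  omega

end MultiGraph

end Aux

section Bridge

open MultiGraph Sum

variable [Fintype V1] [Fintype V2] [DecidableEq V1] [DecidableEq V2]
  (H1 : MultiGraph V1) (H2 : MultiGraph V2) (w1 : V1) (w2 : V2)

lemma div_bridgeJoin_inl (f : V1 ⊕ V2 → ℤ) (a : V1) :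
    (bridgeJoin H1 H2 w1 w2).div f (.inl a) =
      H1.div (f ∘ .inl) a + (f (.inr w2) - f (.inl w1)) * one w1 a := by
  unfold MultiGraph.div bridgeJoin one
  rw [Fintype.sum_sum_type]
  dsimp only [Function.comp_apply]
  by_cases ha : a = w1
  · subst ha
    simp [ite_mul, Finset.sum_ite_eq', Finset.mem_univ, apply_ite]
  · simp [ha]

lemma div_bridgeJoin_inr (f : V1 ⊕ V2 → ℤ) (b : V2) :
    (bridgeJoin H1 H2 w1 w2).div f (.inr b) =
      H2.div (f ∘ .inr) b - (f (.inr w2) - f (.inl w1)) * one w2 b := by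
  unfold MultiGraph.div bridgeJoin one
  rw [Fintype.sum_sum_type]
  dsimp only [Function.comp_apply]
  by_cases hb : b = w2
  · subst hb
    simp [ite_mul, Finset.sum_ite_eq', Finset.mem_univ, apply_ite, and_comm]
    ring
  · simp [hb, and_comm]

lemma div_const_shift (G : MultiGraph V1) (f : V1 → ℤ) (c : ℤ) :
    G.div (fun v => f v + c) = G.div f := by
  funext v
  unfold MultiGraph.div
  apply Finset.sum_congr rfl
  intro w _
  ring

lemma principal_bridgeJoin_iff (P : V1 ⊕ V2 → ℤ) :
    (bridgeJoin H1 H2 w1 w2).Principal P ↔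
      ∃ k : ℤ, H1.Principal (fun a => P (.inl a) - k * one w1 a) ∧
        H2.Principal (fun b => P (.inr b) + k * one w2 b) := by
  constructor
  · rintro ⟨f, hf⟩
    refine ⟨f (.inr w2) - f (.inl w1), ⟨f ∘ .inl, ?_⟩, ⟨f ∘ .inr, ?_⟩⟩
    · funext a
      have := div_bridgeJoin_inl H1 H2 w1 w2 f a
      rw [hf] at *
      omega
    · funext b
      have := div_bridgeJoin_inr H1 H2 w1 w2 f b
      rw [hf] at *
      omega
  · rintro ⟨k, ⟨f1, h1⟩, ⟨f2, h2⟩⟩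
    set c : ℤ := k + f1 w1 - f2 w2 with hc
    refine ⟨Sum.elim f1 (fun b => f2 b + c), ?_⟩
    have hX : (Sum.elim f1 (fun b => f2 b + c) (Sum.inr w2) : ℤ)
        - Sum.elim f1 (fun b => f2 b + c) (Sum.inl w1) = k := by
      simp only [Sum.elim_inl, Sum.elim_inr]
      omega
    funext x
    cases x with
    | inl a =>
      rw [div_bridgeJoin_inl, hX]
      have ha := congrFun h1 a
      have hcomp : (Sum.elim f1 (fun b => f2 b + c) ∘ Sum.inl) = f1 := rfl
      rw [hcomp]
      omega
    | inr b =>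
      rw [div_bridgeJoin_inr, hX]
      have hb := congrFun h2 b
      have hcomp : (Sum.elim f1 (fun b => f2 b + c) ∘ Sum.inr) = fun b => f2 b + c := rfl
      rw [hcomp, div_const_shift]
      omega

lemma winnable_bridgeJoin_iff (D : V1 ⊕ V2 → ℤ) :
    (bridgeJoin H1 H2 w1 w2).Winnable D ↔
      ∃ k : ℤ, H1.Winnable (fun a => D (.inl a) + k * one w1 a) ∧
        H2.Winnable (fun b => D (.inr b) - k * one w2 b) := by
  constructor
  · rintro ⟨e, he, hP⟩
    rw [LinEquiv, principal_bridgeJoin_iff] at hP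
    obtain ⟨k, h1, h2⟩ := hP
    refine ⟨k, ⟨e ∘ .inl, fun a => he (.inl a), ?_⟩, ⟨e ∘ .inr, fun b => he (.inr b), ?_⟩⟩
    · obtain ⟨f1, hf1⟩ := h1
      refine ⟨f1, ?_⟩
      funext a
      have := congrFun hf1 a
      simp only [Pi.sub_apply, Function.comp_apply] at *
      omega
    · obtain ⟨f2, hf2⟩ := h2
      refine ⟨f2, ?_⟩
      funext b
      have := congrFun hf2 b
      simp only [Pi.sub_apply, Function.comp_apply] at *
      omega
  · rintro ⟨k, ⟨e1, he1, f1, hf1⟩, ⟨e2, he2, f2, hf2⟩⟩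
    refine ⟨Sum.elim e1 e2, ?_, ?_⟩
    · rintro (a | b)
      · exact he1 a
      · exact he2 b
    · rw [LinEquiv, principal_bridgeJoin_iff]
      refine ⟨k, ⟨f1, ?_⟩, ⟨f2, ?_⟩⟩
      · funext a
        have := congrFun hf1 a
        simp only [Pi.sub_apply, Sum.elim_inl] at *
        omega
      · funext b
        have := congrFun hf2 b
        simp only [Pi.sub_apply, Sum.elim_inr] at *
        omega

end Bridge

section Iso

open MultiGraph

variable {V V' : Type} [Fintype V] [Fintype V']

lemma div_map (G : MultiGraph V) (G' : MultiGraph V') (φ : V ≃ V')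
    (hE : ∀ u v, G'.E (φ u) (φ v) = G.E u v) (f : V → ℤ) :
    G'.div (f ∘ φ.symm) = (G.div f) ∘ φ.symm := by
  funext v'
  unfold MultiGraph.div
  simp only [Function.comp_apply]
  refine (Fintype.sum_equiv φ _ _ ?_).symm
  intro x
  rw [← Equiv.apply_symm_apply φ v', hE]
  simp

lemma principal_map (G : MultiGraph V) (G' : MultiGraph V') (φ : V ≃ V')
    (hE : ∀ u v, G'.E (φ u) (φ v) = G.E u v) (P : V → ℤ) :
    G'.Principal (P ∘ φ.symm) ↔ G.Principal P := by
  constructor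
  · rintro ⟨g, hg⟩
    refine ⟨g ∘ φ, ?_⟩
    have hco : (g ∘ φ) ∘ φ.symm = g := by funext w'; simp
    have h2 := div_map G G' φ hE (g ∘ φ)
    rw [hco] at h2
    funext v
    have h1 := congrFun hg (φ v)
    have h3 := congrFun h2 (φ v)
    simp only [Function.comp_apply, Equiv.symm_apply_apply] at h1 h3
    rw [h1, ← h3]
  · rintro ⟨f, hf⟩
    exact ⟨f ∘ φ.symm, by rw [hf, div_map G G' φ hE]⟩

lemma winnable_map (G : MultiGraph V) (G' : MultiGraph V') (φ : V ≃ V')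
    (hE : ∀ u v, G'.E (φ u) (φ v) = G.E u v) (D : V → ℤ) :
    G'.Winnable (D ∘ φ.symm) ↔ G.Winnable D := by
  constructor
  · rintro ⟨e', he', hP⟩
    refine ⟨e' ∘ φ, fun v => he' (φ v), ?_⟩
    rw [LinEquiv] at hP ⊢
    have : (e' - D ∘ φ.symm) = (e' ∘ φ - D) ∘ φ.symm := by
      funext w'; simp
    rw [this, principal_map G G' φ hE] at hP
    exact hP
  · rintro ⟨e, he, hP⟩
    refine ⟨e ∘ φ.symm, fun v' => he _, ?_⟩
    rw [LinEquiv] at hP ⊢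
    have : (e ∘ φ.symm - D ∘ φ.symm) = (e - D) ∘ φ.symm := by
      funext w'; simp
    rw [this, principal_map G G' φ hE]
    exact hP

lemma deg_comp_symm (φ : V ≃ V') (e : V → ℤ) : deg (e ∘ φ.symm) = deg e := by
  unfold deg
  exact Equiv.sum_comp φ.symm e

lemma rank_map (G : MultiGraph V) (G' : MultiGraph V') (φ : V ≃ V')
    (hE : ∀ u v, G'.E (φ u) (φ v) = G.E u v) (d : V → ℤ) :
    G'.rank (d ∘ φ.symm) = G.rank d := by
  have hset : G'.rset (d ∘ φ.symm) = G.rset d := by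
    ext s
    constructor
    · intro hs e he hdeg
      have h := hs (e ∘ φ.symm) (fun v' => he _) (by rw [deg_comp_symm]; exact hdeg)
      have heq : (d ∘ φ.symm - e ∘ φ.symm) = (d - e) ∘ φ.symm := by funext w'; simp
      rw [heq, winnable_map G G' φ hE] at h
      exact h
    · intro hs e' he' hdeg
      have h := hs (e' ∘ φ) (fun v => he' _) ?_
      · have heq : (d - e' ∘ φ) ∘ φ.symm = (d ∘ φ.symm - e') := by funext w'; simp
        rw [← winnable_map G G' φ hE, heq] at h
        exact h
      · rw [← hdeg, ← deg_comp_symm φ (e' ∘ φ)]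
        congr 1
        funext w'; simp
  rw [rank_eq, rank_eq, hset]
  by_cases hw : G.Winnable d
  · rw [if_pos ((winnable_map G G' φ hE d).2 hw), if_pos hw]
  · rw [if_neg (fun h => hw ((winnable_map G G' φ hE d).1 h)), if_neg hw]

end Iso

section PureBridge

open MultiGraph Sum

variable [Fintype V1] [Fintype V2] [DecidableEq V1] [DecidableEq V2]

lemma one_cases [DecidableEq V] (v a : V) : one v a = 1 ∨ one v a = 0 := by
  unfold one; split <;> simp

lemma effective_one [DecidableEq V] (v : V) : Effective (one v) := by
  intro a; rcases one_cases v a with h | h <;> rw [h] <;> omega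

lemma deg_elim (e1 : V1 → ℤ) (e2 : V2 → ℤ) :
    deg (Sum.elim e1 e2) = deg e1 + deg e2 := by
  unfold deg
  rw [Fintype.sum_sum_type]
  rfl

lemma bridge_rank_le (H1 : MultiGraph V1) (H2 : MultiGraph V2) (w1 : V1) (w2 : V2)
    (D : V1 ⊕ V2 → ℤ) :
    (bridgeJoin H1 H2 w1 w2).rank D ≤
      H1.rank (D ∘ Sum.inl) + H2.rank (D ∘ Sum.inr) +
      (if H1.rank (D ∘ Sum.inl - one w1) = H1.rank (D ∘ Sum.inl) ∧
          H2.rank (D ∘ Sum.inr - one w2) = H2.rank (D ∘ Sum.inr) then 1 else 0) := by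
  haveI : Nonempty V1 := ⟨w1⟩
  haveI : Nonempty V2 := ⟨w2⟩
  haveI : Nonempty (V1 ⊕ V2) := ⟨.inl w1⟩
  set D1 : V1 → ℤ := D ∘ Sum.inl with hD1
  set D2 : V2 → ℤ := D ∘ Sum.inr with hD2
  by_cases hbp : H1.rank (D1 - one w1) = H1.rank D1 ∧ H2.rank (D2 - one w2) = H2.rank D2
  · -- unconditional bound rank ≤ r1 + r2 + 1
    rw [if_pos hbp]
    obtain ⟨e1, he1, hdeg1, hw1⟩ := H1.exists_unwinnable D1
    obtain ⟨e2, he2, hdeg2, hw2⟩ := H2.exists_unwinnable D2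
    have hwJ : ¬ (bridgeJoin H1 H2 w1 w2).Winnable (D - Sum.elim e1 e2) := by
      rw [winnable_bridgeJoin_iff]
      rintro ⟨k, hk1, hk2⟩
      rcases le_or_gt k 0 with hk | hk
      · refine hw1 (winnable_mono H1 hk1 fun a => ?_)
        simp only [hD1, Pi.sub_apply, Sum.elim_inl, Function.comp_apply]
        rcases one_cases w1 a with h | h <;> rw [h] <;> simp <;> omega
      · refine hw2 (winnable_mono H2 hk2 fun b => ?_)
        simp only [hD2, Pi.sub_apply, Sum.elim_inr, Function.comp_apply]
        rcases one_cases w2 b with h | h <;> rw [h] <;> simp <;> omega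
    have hb := rank_le_of_unwinnable (bridgeJoin H1 H2 w1 w2)
      (e := Sum.elim e1 e2) (by rintro (a | b); exacts [he1 a, he2 b]) hwJ
    rw [deg_elim] at hb
    omega
  · rw [if_neg hbp]
    rcases not_and_or.mp hbp with hne | hne
    · -- w1 is not a base-point
      have hle : H1.rank (D1 - one w1) ≤ H1.rank D1 - 1 := by
        have := H1.rank_sub_one_le D1 w1
        omega
      obtain ⟨e1, he1, hdeg1, hw1⟩ := H1.exists_unwinnable (D1 - one w1)
      obtain ⟨e2, he2, hdeeg2, hw2⟩ := H2.exists_unwinnable D2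
      have hwJ : ¬ (bridgeJoin H1 H2 w1 w2).Winnable (D - Sum.elim e1 e2) := by
        rw [winnable_bridgeJoin_iff]
        rintro ⟨k, hk1, hk2⟩
        rcases le_or_gt k (-1) with hk | hk
        · refine hw1 (winnable_mono H1 hk1 fun a => ?_)
          simp only [hD1, Pi.sub_apply, Sum.elim_inl, Function.comp_apply]
          rcases one_cases w1 a with h | h <;> rw [h] <;> simp <;> omega
        · refine hw2 (winnable_mono H2 hk2 fun b => ?_)
          simp only [hD2, Pi.sub_apply, Sum.elim_inr, Function.comp_apply]
          rcases one_cases w2 b with h | h <;> rw [h] <;> simp <;> omega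
      have hb := rank_le_of_unwinnable (bridgeJoin H1 H2 w1 w2)
        (e := Sum.elim e1 e2) (by rintro (a | b); exacts [he1 a, he2 b]) hwJ
      rw [deg_elim] at hb
      omega
    · -- w2 is not a base-point
      have hle : H2.rank (D2 - one w2) ≤ H2.rank D2 - 1 := by
        have := H2.rank_sub_one_le D2 w2
        omega
      obtain ⟨e1, he1, hdeg1, hw1⟩ := H1.exists_unwinnable D1
      obtain ⟨e2, he2, hdeg2, hw2⟩ := H2.exists_unwinnable (D2 - one w2)
      have hwJ : ¬ (bridgeJoin H1 H2 w1 w2).Winnable (D - Sum.elim e1 e2) := by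
        rw [winnable_bridgeJoin_iff]
        rintro ⟨k, hk1, hk2⟩
        rcases le_or_gt k 0 with hk | hk
        · refine hw1 (winnable_mono H1 hk1 fun a => ?_)
          simp only [hD1, Pi.sub_apply, Sum.elim_inl, Function.comp_apply]
          rcases one_cases w1 a with h | h <;> rw [h] <;> simp <;> omega
        · refine hw2 (winnable_mono H2 hk2 fun b => ?_)
          simp only [hD2, Pi.sub_apply, Sum.elim_inr, Function.comp_apply]
          rcases one_cases w2 b with h | h <;> rw [h] <;> simp <;> omega
      have hb := rank_le_of_unwinnable (bridgeJoin H1 H2 w1 w2)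
        (e := Sum.elim e1 e2) (by rintro (a | b); exacts [he1 a, he2 b]) hwJ
      rw [deg_elim] at hb
      omega

end PureBridge

section Glue

open MultiGraph

variable [Fintype V1] [Fintype V2] [DecidableEq V1] [DecidableEq V2]
  (G1 : MultiGraph V1) (G2 : MultiGraph V2) (ω1 : V1 → ℕ) (ω2 : V2 → ℕ)
  (v1 : V1) (v2 : V2)

/-- The identification between `(G1 ∪_e G2)•` and `G1• ∪_e G2•`. -/
def bulletJoinEquiv :
    ((V1 ⊕ V2) ⊕ (Σ v : V1 ⊕ V2,
        Fin ((bridgeJoin G1 G2 v1 v2).loops v + Sum.elim ω1 ω2 v))) ≃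
      ((V1 ⊕ (Σ v : V1, Fin (G1.loops v + ω1 v))) ⊕
        (V2 ⊕ (Σ v : V2, Fin (G2.loops v + ω2 v)))) where
  toFun x :=
    match x with
    | .inl (.inl a) => .inl (.inl a)
    | .inl (.inr b) => .inr (.inl b)
    | .inr ⟨.inl a, i⟩ => .inl (.inr ⟨a, i⟩)
    | .inr ⟨.inr b, i⟩ => .inr (.inr ⟨b, i⟩)
  invFun x :=
    match x with
    | .inl (.inl a) => .inl (.inl a)
    | .inr (.inl b) => .inl (.inr b)
    | .inl (.inr ⟨a, i⟩) => .inr ⟨.inl a, i⟩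
    | .inr (.inr ⟨b, i⟩) => .inr ⟨.inr b, i⟩
  left_inv x := by rcases x with (a | b) | ⟨(a | b), i⟩ <;> rfl
  right_inv x := by rcases x with (a | ⟨a, i⟩) | (b | ⟨b, i⟩) <;> rfl

lemma bulletJoinEquiv_E (x y : (V1 ⊕ V2) ⊕ (Σ v : V1 ⊕ V2,
      Fin ((bridgeJoin G1 G2 v1 v2).loops v + Sum.elim ω1 ω2 v))) :
    (bridgeJoin (bullet G1 ω1) (bullet G2 ω2) (.inl v1) (.inl v2)).E
        (bulletJoinEquiv G1 G2 ω1 ω2 v1 v2 x) (bulletJoinEquiv G1 G2 ω1 ω2 v1 v2 y) =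
      (bullet (bridgeJoin G1 G2 v1 v2) (Sum.elim ω1 ω2)).E x y := by
  rcases x with (a | b) | ⟨(a | b), i⟩ <;>
    rcases y with (a' | b') | ⟨(a' | b'), i'⟩ <;>
    (dsimp only [bulletJoinEquiv, Equiv.coe_fn_mk]; simp [bridgeJoin, bullet])

end Glue

/-- Proposition: bridge inequality for weighted ranks. -/
theorem statement_4 {V1 V2 : Type} [Fintype V1] [DecidableEq V1] [Fintype V2] [DecidableEq V2]
    (G1 : MultiGraph V1) (G2 : MultiGraph V2)
    (hc1 : G1.Connected) (hc2 : G2.Connected)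
    (ω1 : V1 → ℕ) (ω2 : V2 → ℕ) (v1 : V1) (v2 : V2) (d : V1 ⊕ V2 → ℤ) :
    wrank (bridgeJoin G1 G2 v1 v2) (Sum.elim ω1 ω2) d ≤
      wrank G1 ω1 (d ∘ Sum.inl) + wrank G2 ω2 (d ∘ Sum.inr) +
      (if wBasePoint G1 ω1 (d ∘ Sum.inl) v1 ∧ wBasePoint G2 ω2 (d ∘ Sum.inr) v2
        then 1 else 0) := by
  classical
  set H1 := bullet G1 ω1 with hH1
  set H2 := bullet G2 ω2 with hH2
  set φ := bulletJoinEquiv G1 G2 ω1 ω2 v1 v2 with hφ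
  set GB := bullet (bridgeJoin G1 G2 v1 v2) (Sum.elim ω1 ω2) with hGB
  set GJ := bridgeJoin H1 H2 (Sum.inl v1) (Sum.inl v2) with hGJ
  have hE : ∀ x y, GJ.E (φ x) (φ y) = GB.E x y := bulletJoinEquiv_E G1 G2 ω1 ω2 v1 v2
  set D := (Sum.elim d 0) ∘ φ.symm with hD
  have hL : wrank (bridgeJoin G1 G2 v1 v2) (Sum.elim ω1 ω2) d = GJ.rank D :=
    (rank_map GB GJ φ hE (Sum.elim d 0)).symm
  have hDl : D ∘ Sum.inl = Sum.elim (d ∘ Sum.inl) 0 := by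
    funext x; rcases x with a | ⟨a, i⟩ <;> rfl
  have hDr : D ∘ Sum.inr = Sum.elim (d ∘ Sum.inr) 0 := by
    funext x; rcases x with b | ⟨b, i⟩ <;> rfl
  have hmain := bridge_rank_le H1 H2 (Sum.inl v1) (Sum.inl v2) D
  rw [hDl, hDr] at hmain
  have hrew1 : Sum.elim (d ∘ Sum.inl - one v1)
      (0 : (Σ v : V1, Fin (G1.loops v + ω1 v)) → ℤ) =
      Sum.elim (d ∘ Sum.inl) 0 - one (Sum.inl v1) := by
    funext x
    rcases x with a | σ <;> simp [one]
  have hrew2 : Sum.elim (d ∘ Sum.inr - one v2)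
      (0 : (Σ v : V2, Fin (G2.loops v + ω2 v)) → ℤ) =
      Sum.elim (d ∘ Sum.inr) 0 - one (Sum.inl v2) := by
    funext x
    rcases x with b | σ <;> simp [one]
  have hbp1 : wBasePoint G1 ω1 (d ∘ Sum.inl) v1 ↔
      H1.rank (Sum.elim (d ∘ Sum.inl) 0 - one (Sum.inl v1)) =
        H1.rank (Sum.elim (d ∘ Sum.inl) 0) := by
    unfold wBasePoint wrank
    rw [hrew1, hH1]
  have hbp2 : wBasePoint G2 ω2 (d ∘ Sum.inr) v2 ↔
      H2.rank (Sum.elim (d ∘ Sum.inr) 0 - one (Sum.inl v2)) =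
        H2.rank (Sum.elim (d ∘ Sum.inr) 0) := by
    unfold wBasePoint wrank
    rw [hrew2, hH2]
  rw [hL]
  unfold wrank
  rw [← hH1, ← hH2]
  simp only [hbp1, hbp2]
  exact hmain

end BN
end

section
/- Let G be a loopless finite connected graph with at least one cycle (i.e., G is not a tree). Then there is no divisor d on G with deg(d) = 1 and r_G(d) ≥ 1. -/
open scoped Classical

namespace BN

variable {V V1 V2 : Type}

open MultiGraph

section Aux
set_option linter.unusedSectionVars false

open Finset

variable {V : Type} [Fintype V] [DecidableEq V]

lemma deg_sub (a b : V → ℤ) : deg (a - b) = deg a - deg b := by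
  simp [deg, Finset.sum_sub_distrib]

lemma deg_one (v : V) : deg (one v) = 1 := by
  simp [deg, one]

lemma deg_div (G : MultiGraph V) (f : V → ℤ) : deg (G.div f) = 0 := by
  have h : deg (G.div f) + deg (G.div f) = 0 := by
    unfold deg MultiGraph.div
    have hcomm : (∑ v : V, ∑ w : V, (G.E v w : ℤ) * (f w - f v))
        = ∑ v : V, ∑ w : V, (G.E w v : ℤ) * (f v - f w) := Finset.sum_comm
    nth_rewrite 2 [hcomm]
    rw [← Finset.sum_add_distrib]
    apply Finset.sum_eq_zero; intro v _
    rw [← Finset.sum_add_distrib]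
    apply Finset.sum_eq_zero; intro w _
    rw [G.symm w v]; ring
  linarith

lemma eff_deg_zero {e : V → ℤ} (he : Effective e) (hd : deg e = 0) :
    ∀ v, e v = 0 := by
  intro v
  exact (Finset.sum_eq_zero_iff_of_nonneg (fun u _ => he u)).mp hd v (Finset.mem_univ v)

lemma div_sub (G : MultiGraph V) (f g : V → ℤ) :
    G.div (f - g) = G.div f - G.div g := by
  funext v
  simp only [MultiGraph.div, Pi.sub_apply, ← Finset.sum_sub_distrib]
  apply Finset.sum_congr rfl
  intro w _; ring

lemma winnable_add_eff (G : MultiGraph V) {x c : V → ℤ}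
    (hx : G.Winnable x) (hcc : Effective c) : G.Winnable (x + c) := by
  obtain ⟨e, he, f, hf⟩ := hx
  refine ⟨e + c, fun v => add_nonneg (he v) (hcc v), f, ?_⟩
  rw [show e + c - (x + c) = e - x from by ring, hf]

lemma exists_cross (G : MultiGraph V) (hc : G.Connected) (P : V → Prop)
    (a b : V) (ha : P a) (hb : ¬ P b) : ∃ u x, P u ∧ ¬ P x ∧ 0 < G.E u x := by
  have key : ∀ y, Relation.ReflTransGen (fun u x => 0 < G.E u x) a y → ¬ P y →
      ∃ u x, P u ∧ ¬ P x ∧ 0 < G.E u x := by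
    intro y hy
    induction hy with
    | refl => intro h; exact absurd ha h
    | @tail c d h1 h2 ih =>
      intro hd
      by_cases hPc : P c
      · exact ⟨c, d, hPc, hd, h2⟩
      · exact ih hPc
  exact key b (hc a b) hb

end Aux

section Aux2
set_option linter.unusedSectionVars false

variable {V : Type} [Fintype V] [DecidableEq V]

lemma bridge (G : MultiGraph V) (hc : G.Connected) (v w : V) (hE : 0 < G.E v w)
    (f : V → ℤ) (hf : (one w - one v : V → ℤ) = G.div f) :
    ∃ S : Finset V, v ∈ S ∧ w ∉ S ∧
      ∀ a ∈ S, ∀ b ∉ S, G.E a b = if a = v ∧ b = w then 1 else 0 := by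
  have hvw : v ≠ w := by
    rintro rfl
    rw [G.noDiag] at hE
    exact lt_irrefl 0 hE
  obtain ⟨u0, -, hu0⟩ := Finset.exists_max_image Finset.univ f ⟨v, Finset.mem_univ v⟩
  have hu0' : ∀ x : V, f x ≤ f u0 := fun x => hu0 x (Finset.mem_univ x)
  set S : Finset V := Finset.univ.filter (fun u => f u = f u0) with hS
  have hmemS : ∀ u : V, u ∈ S ↔ f u = f u0 := by
    intro u; simp [hS]
  -- f is nonconstant
  have hnc : ∃ x, f x ≠ f u0 := by
    by_contra h
    push_neg at h
    have h1 := congrFun hf w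
    simp only [Pi.sub_apply, one, if_pos rfl, MultiGraph.div] at h1
    rw [if_neg (Ne.symm hvw)] at h1
    have h2 : (∑ x : V, (G.E w x : ℤ) * (f x - f w)) = 0 := by
      apply Finset.sum_eq_zero; intro x _
      rw [h x, h w]; ring
    rw [h2] at h1
    norm_num at h1
  obtain ⟨x1, hx1⟩ := hnc
  -- sum of div f over S
  have hsum1 : (∑ u ∈ S, G.div f u)
      = (if w ∈ S then (1:ℤ) else 0) - (if v ∈ S then 1 else 0) := by
    rw [← hf]
    simp only [Pi.sub_apply, one]
    rw [Finset.sum_sub_distrib]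
    rw [Finset.sum_ite_eq' S w (fun _ => (1:ℤ)), Finset.sum_ite_eq' S v (fun _ => (1:ℤ))]
  -- split the divisor sum
  have hsum2 : (∑ u ∈ S, G.div f u) = ∑ u ∈ S, ∑ x ∈ Sᶜ, (G.E u x : ℤ) * (f x - f u) := by
    unfold MultiGraph.div
    have : ∀ u ∈ S, (∑ x : V, (G.E u x : ℤ) * (f x - f u))
        = ∑ x ∈ Sᶜ, (G.E u x : ℤ) * (f x - f u) := by
      intro u hu
      rw [← Finset.sum_add_sum_compl S (fun x => (G.E u x : ℤ) * (f x - f u))]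
      have hz : (∑ x ∈ S, (G.E u x : ℤ) * (f x - f u)) = 0 := by
        apply Finset.sum_eq_zero; intro x hx
        rw [(hmemS x).mp hx, (hmemS u).mp hu]; ring
      rw [hz, zero_add]
    exact Finset.sum_congr rfl this
  -- the crossing weight
  set W : ℕ := ∑ u ∈ S, ∑ x ∈ Sᶜ, G.E u x with hW
  have hbound : (∑ u ∈ S, ∑ x ∈ Sᶜ, (G.E u x : ℤ) * (f x - f u)) ≤ -(W : ℤ) := by
    rw [hW]
    push_cast
    rw [← Finset.sum_neg_distrib]
    apply Finset.sum_le_sum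
    intro u hu
    rw [← Finset.sum_neg_distrib]
    apply Finset.sum_le_sum
    intro x hx
    have hfx : f x ≠ f u0 := by
      have := Finset.mem_compl.mp hx
      rw [hmemS x] at this; exact this
    have hfu : f u = f u0 := (hmemS u).mp hu
    have h1 : f x - f u ≤ -1 := by
      have := hu0' x
      omega
    have hE0 : (0:ℤ) ≤ (G.E u x : ℤ) := Int.natCast_nonneg _
    nlinarith
  -- crossing weight is at least 1
  have hcross : 0 < W := by
    obtain ⟨a, b, ha, hb, hab⟩ := exists_cross G hc (fun u => u ∈ S) u0 x1
      ((hmemS u0).mpr rfl) (fun h => hx1 ((hmemS x1).mp h))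
    have h1 : G.E a b ≤ ∑ x ∈ Sᶜ, G.E a x :=
      Finset.single_le_sum (fun _ _ => Nat.zero_le _) (Finset.mem_compl.mpr hb)
    have h2 : (∑ x ∈ Sᶜ, G.E a x) ≤ W :=
      Finset.single_le_sum (f := fun u => ∑ x ∈ Sᶜ, G.E u x)
        (fun _ _ => Nat.zero_le _) ha
    omega
  -- put the pieces together
  have hIle : (if w ∈ S then (1:ℤ) else 0) - (if v ∈ S then 1 else 0) ≤ -(W:ℤ) := by
    rw [← hsum1, hsum2]; exact hbound
  have hwS : w ∉ S := by
    by_contra h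
    have h' := hIle
    rw [if_pos h] at h'
    split_ifs at h' <;> omega
  have hvS : v ∈ S := by
    by_contra h
    have h' := hIle
    rw [if_neg hwS, if_neg h] at h'
    omega
  have hW1 : W = 1 := by
    have h' := hIle
    rw [if_neg hwS, if_pos hvS] at h'
    omega
  refine ⟨S, hvS, hwS, ?_⟩
  have hWprod : (∑ p ∈ S ×ˢ Sᶜ, G.E p.1 p.2) = 1 := by
    rw [Finset.sum_product, ← hW]
    exact hW1
  have hvwmem : (v, w) ∈ S ×ˢ Sᶜ := Finset.mem_product.mpr ⟨hvS, Finset.mem_compl.mpr hwS⟩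
  intro a ha b hb
  have habmem : (a, b) ∈ S ×ˢ Sᶜ := Finset.mem_product.mpr ⟨ha, Finset.mem_compl.mpr hb⟩
  by_cases hab : a = v ∧ b = w
  · rw [if_pos hab]
    obtain ⟨rfl, rfl⟩ := hab
    have h1 : G.E a b ≤ 1 := by
      calc G.E a b ≤ ∑ p ∈ S ×ˢ Sᶜ, G.E p.1 p.2 :=
            Finset.single_le_sum (f := fun p => G.E p.1 p.2) (fun _ _ => Nat.zero_le _) hvwmem
        _ = 1 := hWprod
    omega
  · rw [if_neg hab]
    have hne : ((v, w) : V × V) ≠ (a, b) := by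
      intro h
      rw [Prod.mk.injEq] at h
      exact hab ⟨h.1.symm, h.2.symm⟩
    have hsub : ({(v, w), (a, b)} : Finset (V × V)) ⊆ S ×ˢ Sᶜ := by
      intro p hp
      simp only [Finset.mem_insert, Finset.mem_singleton] at hp
      rcases hp with rfl | rfl
      · exact hvwmem
      · exact habmem
    have h2 : (∑ p ∈ ({(v, w), (a, b)} : Finset (V × V)), G.E p.1 p.2) ≤ 1 := by
      rw [← hWprod]
      exact Finset.sum_le_sum_of_subset hsub
    rw [Finset.sum_pair hne] at h2
    change G.E v w + G.E a b ≤ 1 at h2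
    omega

end Aux2

section Aux3
set_option linter.unusedSectionVars false

variable {V : Type} [Fintype V] [DecidableEq V]

/-- Restriction of a multigraph to a subset of vertices. -/
def restrict (G : MultiGraph V) (S : Finset V) : MultiGraph {x // x ∈ S} where
  E a b := G.E a b
  loops _ := 0
  symm a b := G.symm a b
  noDiag a := G.noDiag a

lemma rtg_step_retract {r : V → V → Prop} (hsym : ∀ a b, r a b → r b a)
    (P : V → Prop) (v w : V)
    (hcross : ∀ a b, r a b → P a → ¬ P b → a = v ∧ b = w) (hv : P v) :
    ∀ a b, Relation.ReflTransGen r a b →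
      Relation.ReflTransGen (fun x y => P x ∧ P y ∧ r x y)
        (if P a then a else v) (if P b then b else v) := by
  intro a b hab
  induction hab with
  | refl => exact .refl
  | @tail c d h1 h2 ih =>
    refine ih.trans ?_
    by_cases hPc : P c <;> by_cases hPd : P d
    · rw [if_pos hPc, if_pos hPd]
      exact Relation.ReflTransGen.single ⟨hPc, hPd, h2⟩
    · obtain ⟨rfl, rfl⟩ := hcross c d h2 hPc hPd
      rw [if_pos hPc, if_neg hPd]
    · obtain ⟨rfl, rfl⟩ := hcross d c (hsym c d h2) hPd hPc
      rw [if_neg hPc, if_pos hPd]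
    · rw [if_neg hPc, if_neg hPd]

lemma rtg_subtype {P : V → Prop} {r : V → V → Prop} {a b : V}
    (h : Relation.ReflTransGen (fun x y => P x ∧ P y ∧ r x y) a b) (ha : P a) :
    ∀ hb : P b, Relation.ReflTransGen (fun x y : Subtype P => r x.1 y.1) ⟨a, ha⟩ ⟨b, hb⟩ := by
  induction h with
  | refl => intro hb; exact .refl
  | @tail c d h1 h2 ih =>
    intro hd
    exact (ih h2.1).tail h2.2.2

lemma restrict_connected (G : MultiGraph V) (hc : G.Connected) (S : Finset V)
    (v w : V) (hv : v ∈ S) (hw : w ∉ S)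
    (hcross : ∀ a b, 0 < G.E a b → a ∈ S → b ∉ S → a = v ∧ b = w) :
    (restrict G S).Connected := by
  intro p q
  obtain ⟨a, ha⟩ := p
  obtain ⟨b, hb⟩ := q
  have key := rtg_step_retract (r := fun x y => 0 < G.E x y)
    (fun x y h => by show 0 < G.E y x; rw [G.symm y x]; exact h) (fun x => x ∈ S) v w hcross hv a b (hc a b)
  rw [if_pos ha, if_pos hb] at key
  exact rtg_subtype key ha hb

end Aux3

section Aux4
set_option linter.unusedSectionVars false

lemma tree_bound : ∀ (n : ℕ) (V : Type) [Fintype V] [DecidableEq V] (G : MultiGraph V),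
    Fintype.card V ≤ n → Nonempty V → G.Connected →
    (∀ v w, 0 < G.E v w → ∃ S : Finset V, v ∈ S ∧ w ∉ S ∧
      ∀ a ∈ S, ∀ b ∉ S, G.E a b = if a = v ∧ b = w then 1 else 0) →
    (∑ v, ∑ w, G.E v w) + 2 ≤ 2 * Fintype.card V := by
  intro n
  induction n with
  | zero =>
    intro V _ _ G hcard hne _ _
    have := Fintype.card_pos (α := V)
    omega
  | succ n ih =>
    intro V _ _ G hcard hne hc hbr
    by_cases hedge : ∃ v w, 0 < G.E v w
    · obtain ⟨v, w, hvw⟩ := hedge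
      obtain ⟨S, hv, hw, hcut⟩ := hbr v w hvw
      have hwc : w ∈ Sᶜ := Finset.mem_compl.mpr hw
      have hvc : v ∉ Sᶜ := fun h => (Finset.mem_compl.mp h) hv
      -- cardinalities
      have hcardS : S.card ≤ n := by
        have h1 : S ⊂ Finset.univ := Finset.ssubset_univ_iff.mpr (fun h => hw (h ▸ Finset.mem_univ w))
        have := Finset.card_lt_card h1
        rw [Finset.card_univ] at this
        omega
      have hcardT : Sᶜ.card ≤ n := by
        have h1 : Sᶜ ⊂ Finset.univ := Finset.ssubset_univ_iff.mpr (fun h => hvc (h ▸ Finset.mem_univ v))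
        have := Finset.card_lt_card h1
        rw [Finset.card_univ] at this
        omega
      have hcards : S.card + Sᶜ.card = Fintype.card V := Finset.card_add_card_compl S
      -- cross conditions
      have hcrossS : ∀ a b, 0 < G.E a b → a ∈ S → b ∉ S → a = v ∧ b = w := by
        intro a b hab ha hb
        have := hcut a ha b hb
        by_cases h : a = v ∧ b = w
        · exact h
        · rw [if_neg h] at this; omega
      have hcrossT : ∀ a b, 0 < G.E a b → a ∈ Sᶜ → b ∉ Sᶜ → a = w ∧ b = v := by
        intro a b hab ha hb
        have hbS : b ∈ S := by
          by_contra h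
          exact hb (Finset.mem_compl.mpr h)
        have haS : a ∉ S := Finset.mem_compl.mp ha
        have h2 : 0 < G.E b a := by rw [G.symm b a]; exact hab
        have := hcrossS b a h2 hbS haS
        exact ⟨this.2, this.1⟩
      -- connectivity of the two sides
      have hconS : (restrict G S).Connected := restrict_connected G hc S v w hv hw hcrossS
      have hconT : (restrict G Sᶜ).Connected := by
        refine restrict_connected G hc Sᶜ w v hwc hvc ?_
        exact hcrossT
      -- bridge property of the two sides
      have hbrS : ∀ (p q : {x // x ∈ S}), 0 < (restrict G S).E p q →
          ∃ S' : Finset {x // x ∈ S}, p ∈ S' ∧ q ∉ S' ∧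
            ∀ a ∈ S', ∀ b ∉ S', (restrict G S).E a b = if a = p ∧ b = q then 1 else 0 := by
        intro p q hpq
        obtain ⟨S0, hp0, hq0, hcut0⟩ := hbr p.1 q.1 hpq
        refine ⟨Finset.univ.filter (fun x => x.1 ∈ S0), by simpa using hp0, by simpa using hq0, ?_⟩
        intro a ha b hb
        simp only [Finset.mem_filter, Finset.mem_univ, true_and] at ha hb
        have := hcut0 a.1 ha b.1 hb
        have hiff : (a.1 = p.1 ∧ b.1 = q.1) ↔ (a = p ∧ b = q) := by
          rw [Subtype.ext_iff, Subtype.ext_iff]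
        rw [show (restrict G S).E a b = G.E a.1 b.1 from rfl, this]
        by_cases h : a = p ∧ b = q
        · rw [if_pos h, if_pos (hiff.mpr h)]
        · rw [if_neg h, if_neg (fun hx => h (hiff.mp hx))]
      have hbrT : ∀ (p q : {x // x ∈ Sᶜ}), 0 < (restrict G Sᶜ).E p q →
          ∃ S' : Finset {x // x ∈ Sᶜ}, p ∈ S' ∧ q ∉ S' ∧
            ∀ a ∈ S', ∀ b ∉ S', (restrict G Sᶜ).E a b = if a = p ∧ b = q then 1 else 0 := by
        intro p q hpq
        obtain ⟨S0, hp0, hq0, hcut0⟩ := hbr p.1 q.1 hpq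
        refine ⟨Finset.univ.filter (fun x => x.1 ∈ S0), by simpa using hp0, by simpa using hq0, ?_⟩
        intro a ha b hb
        simp only [Finset.mem_filter, Finset.mem_univ, true_and] at ha hb
        have := hcut0 a.1 ha b.1 hb
        have hiff : (a.1 = p.1 ∧ b.1 = q.1) ↔ (a = p ∧ b = q) := by
          rw [Subtype.ext_iff, Subtype.ext_iff]
        rw [show (restrict G Sᶜ).E a b = G.E a.1 b.1 from rfl, this]
        by_cases h : a = p ∧ b = q
        · rw [if_pos h, if_pos (hiff.mpr h)]
        · rw [if_neg h, if_neg (fun hx => h (hiff.mp hx))]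
      -- apply the induction hypothesis
      have hihS := ih {x // x ∈ S} (restrict G S)
        (by rw [Fintype.card_coe]; exact hcardS) ⟨⟨v, hv⟩⟩ hconS hbrS
      have hihT := ih {x // x ∈ Sᶜ} (restrict G Sᶜ)
        (by rw [Fintype.card_coe]; exact hcardT) ⟨⟨w, hwc⟩⟩ hconT hbrT
      -- rewrite the subtype sums
      have hsumS : (∑ p : {x // x ∈ S}, ∑ q : {x // x ∈ S}, (restrict G S).E p q)
          = ∑ a ∈ S, ∑ b ∈ S, G.E a b := by
        rw [show (∑ p : {x // x ∈ S}, ∑ q : {x // x ∈ S}, (restrict G S).E p q)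
            = ∑ p : {x // x ∈ S}, ∑ q : {x // x ∈ S}, G.E p.1 q.1 from rfl]
        rw [Finset.sum_coe_sort S (fun a => ∑ q : {x // x ∈ S}, G.E a q.1)]
        exact Finset.sum_congr rfl fun a _ => Finset.sum_coe_sort S (fun b => G.E a b)
      have hsumT : (∑ p : {x // x ∈ Sᶜ}, ∑ q : {x // x ∈ Sᶜ}, (restrict G Sᶜ).E p q)
          = ∑ a ∈ Sᶜ, ∑ b ∈ Sᶜ, G.E a b := by
        rw [show (∑ p : {x // x ∈ Sᶜ}, ∑ q : {x // x ∈ Sᶜ}, (restrict G Sᶜ).E p q)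
            = ∑ p : {x // x ∈ Sᶜ}, ∑ q : {x // x ∈ Sᶜ}, G.E p.1 q.1 from rfl]
        rw [Finset.sum_coe_sort Sᶜ (fun a => ∑ q : {x // x ∈ Sᶜ}, G.E a q.1)]
        exact Finset.sum_congr rfl fun a _ => Finset.sum_coe_sort Sᶜ (fun b => G.E a b)
      rw [hsumS] at hihS
      rw [hsumT] at hihT
      rw [Fintype.card_coe] at hihS hihT
      -- the cross sums
      have hcr1 : (∑ a ∈ S, ∑ b ∈ Sᶜ, G.E a b) = 1 := by
        have h1 : ∀ a ∈ S, (∑ b ∈ Sᶜ, G.E a b) = if a = v then 1 else 0 := by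
          intro a ha
          have h2 : ∀ b ∈ Sᶜ, G.E a b = if a = v ∧ b = w then 1 else 0 :=
            fun b hb => hcut a ha b (Finset.mem_compl.mp hb)
          rw [Finset.sum_congr rfl h2]
          by_cases hav : a = v
          · simp [hav, Finset.sum_ite_eq', hwc]
          · simp [hav]
        rw [Finset.sum_congr rfl h1]
        simp [Finset.sum_ite_eq', hv]
      have hcr2 : (∑ a ∈ Sᶜ, ∑ b ∈ S, G.E a b) = 1 := by
        have h0 : (∑ a ∈ Sᶜ, ∑ b ∈ S, G.E a b) = ∑ b ∈ S, ∑ a ∈ Sᶜ, G.E b a := by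
          rw [Finset.sum_comm]
          exact Finset.sum_congr rfl fun b _ => Finset.sum_congr rfl fun a _ => G.symm a b
        rw [h0]
        exact hcr1
      -- total sum decomposition
      have htot : (∑ a : V, ∑ b : V, G.E a b)
          = (∑ a ∈ S, ∑ b ∈ S, G.E a b) + (∑ a ∈ S, ∑ b ∈ Sᶜ, G.E a b)
            + ((∑ a ∈ Sᶜ, ∑ b ∈ S, G.E a b) + (∑ a ∈ Sᶜ, ∑ b ∈ Sᶜ, G.E a b)) := by
        rw [← Finset.sum_add_sum_compl S (fun a => ∑ b : V, G.E a b)]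
        rw [show (∑ a ∈ S, ∑ b : V, G.E a b)
            = (∑ a ∈ S, ∑ b ∈ S, G.E a b) + (∑ a ∈ S, ∑ b ∈ Sᶜ, G.E a b) from by
          rw [← Finset.sum_add_distrib]
          exact Finset.sum_congr rfl fun a _ => (Finset.sum_add_sum_compl S (G.E a)).symm]
        rw [show (∑ a ∈ Sᶜ, ∑ b : V, G.E a b)
            = (∑ a ∈ Sᶜ, ∑ b ∈ S, G.E a b) + (∑ a ∈ Sᶜ, ∑ b ∈ Sᶜ, G.E a b) from by
          rw [← Finset.sum_add_distrib]
          exact Finset.sum_congr rfl fun a _ => (Finset.sum_add_sum_compl S (G.E a)).symm]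
      rw [htot, hcr1, hcr2]
      omega
    · push_neg at hedge
      have h0 : (∑ v : V, ∑ w : V, G.E v w) = 0 :=
        Finset.sum_eq_zero fun v _ => Finset.sum_eq_zero fun w _ => by
          have := hedge v w; omega
      have := Fintype.card_pos (α := V)
      omega

end Aux4


/-- a connected loopless graph with a cycle has no divisor of
degree 1 and rank `≥ 1`. -/
theorem statement_7 {V : Type} [Fintype V] [DecidableEq V]
    (G : MultiGraph V) (hl : G.Loopless) (hc : G.Connected)
    (hcyc : Fintype.card V ≤ G.edgeCount) :
    ¬ ∃ d : V → ℤ, deg d = 1 ∧ 1 ≤ G.rank d := by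
  rintro ⟨d, hdeg, hrank⟩
  have hne : Nonempty V := by
    by_contra h
    rw [not_nonempty_iff] at h
    simp [deg] at hdeg
  unfold MultiGraph.rank at hrank
  by_cases hW : G.Winnable d
  swap
  · rw [if_neg hW] at hrank; omega
  rw [if_pos hW] at hrank
  set Srk : Set ℕ :=
    {s : ℕ | ∀ e : V → ℤ, Effective e → deg e = (s : ℤ) → G.Winnable (d - e)} with hSrk
  have h1 : 1 ≤ sSup Srk := by exact_mod_cast hrank
  have hne' : Srk.Nonempty := by
    by_contra h
    rw [Set.not_nonempty_iff_eq_empty] at h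
    rw [h] at h1
    simp at h1
  have hbdd : BddAbove Srk := by
    by_contra h
    rw [csSup_of_not_bddAbove h] at h1
    simp at h1
  have hmem := Nat.sSup_mem hne' hbdd
  set s := sSup Srk with hs
  rw [hSrk, Set.mem_setOf_eq] at hmem
  have hwv : ∀ v : V, G.Winnable (d - one v) := by
    intro v
    have heff : Effective (fun u => if u = v then (s : ℤ) else 0) := by
      intro u
      dsimp only
      split_ifs
      · exact Int.natCast_nonneg s
      · exact le_refl 0
    have hdege : deg (fun u => if u = v then (s : ℤ) else 0) = (s : ℤ) := by
      rw [deg, Finset.sum_ite_eq' Finset.univ v fun _ => (s : ℤ)]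
      simp
    have hwin := hmem _ heff hdege
    have heffc : Effective (fun u => if u = v then (s : ℤ) - 1 else 0) := by
      intro u
      dsimp only
      split_ifs
      · omega
      · exact le_refl 0
    have hw2 := winnable_add_eff G hwin heffc
    have hfun : ((d - fun u => if u = v then (s : ℤ) else 0)
        + fun u => if u = v then (s : ℤ) - 1 else 0) = d - one v := by
      funext u
      simp only [Pi.add_apply, Pi.sub_apply, one]
      by_cases h : u = v
      · rw [if_pos h, if_pos h, if_pos h]; ring
      · rw [if_neg h, if_neg h, if_neg h]; ring
    rw [hfun] at hw2
    exact hw2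
  have hprin : ∀ v : V, ∃ f, (one v - d : V → ℤ) = G.div f := by
    intro v
    obtain ⟨e, he, f, hf⟩ := hwv v
    have hdege : deg e = 0 := by
      have h2 : deg (e - (d - one v)) = 0 := by rw [hf]; exact deg_div G f
      rw [deg_sub, deg_sub, deg_one] at h2
      omega
    have he0 := eff_deg_zero he hdege
    refine ⟨f, ?_⟩
    rw [← hf]
    funext u
    simp only [Pi.sub_apply]
    rw [he0 u]
    ring
  have hbr : ∀ v w, 0 < G.E v w → ∃ S : Finset V, v ∈ S ∧ w ∉ S ∧
      ∀ a ∈ S, ∀ b ∉ S, G.E a b = if a = v ∧ b = w then 1 else 0 := by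
    intro v w hvw
    obtain ⟨fv, hfv⟩ := hprin v
    obtain ⟨fw, hfw⟩ := hprin w
    have hkey : (one w - one v : V → ℤ) = G.div (fw - fv) := by
      rw [div_sub, ← hfv, ← hfw]
      funext u
      simp only [Pi.sub_apply]
      ring
    exact bridge G hc v w hvw (fw - fv) hkey
  have htree := tree_bound (Fintype.card V) V G le_rfl hne hc hbr
  have hloop : (∑ v : V, G.loops v) = 0 := Finset.sum_eq_zero fun v _ => hl v
  rw [MultiGraph.edgeCount, hloop] at hcyc
  omega

end BN
end

section
/- Let G be a loopless finite connected graph with a bridge e with endpoints v1, v2 and components G1, G2 of G ∖ {e}. Suppose d is a divisor on G supported away from neither side, with restrictions d1, d2, and suppose for i = 1,2 there exist effective divisors e_i on G_i of degree r_i + 1 (where r_i = r_{G_i}(d_i)) with r_{G_i}(d_i − e_i) = −1. Then r_G(d − j1(e1) − j2(e2)) = −1, where j_i denotes the pushforward of divisors along the inclusion V(G_i) ⊆ V(G). Consequently r_G(d) ≤ r_{G1}(d1) + r_{G2}(d2) + 1. -/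
open scoped Classical

namespace BN

variable {V V1 V2 : Type}

open MultiGraph

section Aux

variable [Fintype V] [Fintype V1] [Fintype V2] [DecidableEq V1] [DecidableEq V2]

lemma neg_one_le_rank (G : MultiGraph V) (d : V → ℤ) : -1 ≤ G.rank d := by
  unfold MultiGraph.rank
  split <;> omega

lemma not_winnable_of_rank_eq_neg_one {G : MultiGraph V} {d : V → ℤ}
    (h : G.rank d = -1) : ¬ G.Winnable d := by
  intro hw
  unfold MultiGraph.rank at h
  rw [if_pos hw] at h
  omega

lemma winnable_add_effective {G : MultiGraph V} {d g : V → ℤ}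
    (hd : G.Winnable d) (hg : Effective g) : G.Winnable (d + g) := by
  obtain ⟨e, he, f, hf⟩ := hd
  exact ⟨e + g, fun v => add_nonneg (he v) (hg v), f, by
    rw [show e + g - (d + g) = e - d by ring, hf]⟩

lemma effective_deg_zero {d : V → ℤ} (hd : Effective d) (h : deg d = 0) : d = 0 := by
  funext v
  have := (Finset.sum_eq_zero_iff_of_nonneg (fun v _ => hd v)).mp h v (Finset.mem_univ v)
  simpa using this

lemma deg_add (a b : V → ℤ) : deg (a + b) = deg a + deg b := by
  simp [deg, Finset.sum_add_distrib]

lemma deg_sum (a : V1 → ℤ) (b : V2 → ℤ) :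
    deg (Sum.elim a b) = deg a + deg b := by
  simp [deg, Fintype.sum_sum_type]

lemma bridge_div_inl (G1 : MultiGraph V1) (G2 : MultiGraph V2) (v1 : V1) (v2 : V2)
    (f : V1 ⊕ V2 → ℤ) (u : V1) :
    (bridgeJoin G1 G2 v1 v2).div f (Sum.inl u)
      = G1.div (f ∘ Sum.inl) u
        + (if u = v1 then f (Sum.inr v2) - f (Sum.inl v1) else 0) := by
  simp only [MultiGraph.div, bridgeJoin, Fintype.sum_sum_type, Function.comp]
  congr 1
  by_cases h : u = v1 <;> simp [h, Finset.sum_ite_eq']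

lemma bridge_div_inr (G1 : MultiGraph V1) (G2 : MultiGraph V2) (v1 : V1) (v2 : V2)
    (f : V1 ⊕ V2 → ℤ) (w : V2) :
    (bridgeJoin G1 G2 v1 v2).div f (Sum.inr w)
      = G2.div (f ∘ Sum.inr) w
        + (if w = v2 then f (Sum.inl v1) - f (Sum.inr v2) else 0) := by
  simp only [MultiGraph.div, bridgeJoin, Fintype.sum_sum_type, Function.comp]
  rw [add_comm (∑ _, _)]
  congr 1
  by_cases h : w = v2 <;> simp [h, Finset.sum_ite_eq', and_comm]

end Aux

/-- key step in the proof of the bridge inequality. -/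
theorem statement_10 {V1 V2 : Type} [Fintype V1] [DecidableEq V1] [Fintype V2] [DecidableEq V2]
    (G1 : MultiGraph V1) (G2 : MultiGraph V2)
    (hl1 : G1.Loopless) (hl2 : G2.Loopless)
    (hc1 : G1.Connected) (hc2 : G2.Connected)
    (v1 : V1) (v2 : V2) (d : V1 ⊕ V2 → ℤ) (e1 : V1 → ℤ) (e2 : V2 → ℤ)
    (he1 : Effective e1) (he2 : Effective e2)
    (hdeg1 : deg e1 = G1.rank (d ∘ Sum.inl) + 1)
    (hdeg2 : deg e2 = G2.rank (d ∘ Sum.inr) + 1)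
    (hr1 : G1.rank (d ∘ Sum.inl - e1) = -1)
    (hr2 : G2.rank (d ∘ Sum.inr - e2) = -1) :
    (bridgeJoin G1 G2 v1 v2).rank (d - Sum.elim e1 (0 : V2 → ℤ) - Sum.elim (0 : V1 → ℤ) e2) = -1 ∧
    (bridgeJoin G1 G2 v1 v2).rank d ≤
      G1.rank (d ∘ Sum.inl) + G2.rank (d ∘ Sum.inr) + 1 := by
  set r1 := G1.rank (d ∘ Sum.inl) with hr1def
  set r2 := G2.rank (d ∘ Sum.inr) with hr2def
  set G := bridgeJoin G1 G2 v1 v2 with hG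
  set e0 : V1 ⊕ V2 → ℤ := Sum.elim e1 (0 : V2 → ℤ) + Sum.elim (0 : V1 → ℤ) e2 with he0
  have hd'eq : d - Sum.elim e1 (0 : V2 → ℤ) - Sum.elim (0 : V1 → ℤ) e2 = d - e0 := by
    funext x; simp [he0]; ring
  -- Part 1: d - e0 is not winnable on the bridge join.
  have hnw : ¬ G.Winnable (d - e0) := by
    rintro ⟨g, hg, f, hf⟩
    have hg' : ∀ x, g x = (d - e0) x + G.div f x := by
      intro x
      have := congrFun hf x
      simp only [Pi.sub_apply] at this ⊢
      linarith
    set t := f (Sum.inr v2) - f (Sum.inl v1) with ht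
    rcases le_or_gt t 0 with htle | htpos
    · apply not_winnable_of_rank_eq_neg_one hr1
      refine ⟨fun u => (d ∘ Sum.inl - e1) u + G1.div (f ∘ Sum.inl) u, ?_, f ∘ Sum.inl, ?_⟩
      · intro u
        have h1 := hg' (Sum.inl u)
        rw [hG, bridge_div_inl] at h1
        have h0 := hg (Sum.inl u)
        have h2 : (d - e0) (Sum.inl u) = (d ∘ Sum.inl - e1) u := by simp [he0]
        rw [h2] at h1
        by_cases hu : u = v1
        · rw [if_pos hu, ← ht] at h1
          simp only [Pi.sub_apply, Function.comp_apply] at h1 ⊢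
          linarith
        · rw [if_neg hu] at h1
          simp only [Pi.sub_apply, Function.comp_apply] at h1 ⊢
          linarith
      · funext u; simp
    · apply not_winnable_of_rank_eq_neg_one hr2
      refine ⟨fun w => (d ∘ Sum.inr - e2) w + G2.div (f ∘ Sum.inr) w, ?_, f ∘ Sum.inr, ?_⟩
      · intro w
        have h1 := hg' (Sum.inr w)
        rw [hG, bridge_div_inr] at h1
        have h0 := hg (Sum.inr w)
        have h2 : (d - e0) (Sum.inr w) = (d ∘ Sum.inr - e2) w := by simp [he0]
        rw [h2] at h1
        by_cases hw : w = v2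
        · rw [if_pos hw] at h1
          simp only [Pi.sub_apply, Function.comp_apply] at h1 ⊢
          have : f (Sum.inl v1) - f (Sum.inr v2) = -t := by rw [ht]; ring
          rw [this] at h1
          linarith
        · rw [if_neg hw] at h1
          simp only [Pi.sub_apply, Function.comp_apply] at h1 ⊢
          linarith
      · funext w; simp
  have part1 : G.rank (d - Sum.elim e1 (0 : V2 → ℤ) - Sum.elim (0 : V1 → ℤ) e2) = -1 := by
    rw [hd'eq, MultiGraph.rank, if_neg hnw]
  refine ⟨part1, ?_⟩
  -- Part 2
  have hb1 : -1 ≤ r1 := neg_one_le_rank _ _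
  have hb2 : -1 ≤ r2 := neg_one_le_rank _ _
  have he0eff : Effective e0 := by
    rintro (u | w) <;> simp [he0]
    exacts [he1 u, he2 w]
  have hdeg0 : deg e0 = r1 + r2 + 2 := by
    have : deg e0 = deg (Sum.elim e1 (0 : V2 → ℤ)) + deg (Sum.elim (0 : V1 → ℤ) e2) := by
      simp [he0, deg, Finset.sum_add_distrib]
    rw [this, deg_sum, deg_sum]
    simp [deg] at hdeg1 hdeg2 ⊢
    omega
  by_cases hw : G.Winnable d
  · rw [MultiGraph.rank, if_pos hw]
    set S : Set ℕ :=
      {s : ℕ | ∀ e : V1 ⊕ V2 → ℤ, Effective e → deg e = (s : ℤ) → G.Winnable (d - e)} with hS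
    set n0 : ℕ := (r1 + r2 + 2).toNat with hn0def
    have hn0 : (n0 : ℤ) = r1 + r2 + 2 := Int.toNat_of_nonneg (by omega)
    have hn0pos : 1 ≤ n0 := by
      by_contra h
      have hz : (n0 : ℤ) = 0 := by omega
      have he00 : e0 = 0 := effective_deg_zero he0eff (by omega)
      apply hnw
      rw [he00]
      simpa using hw
    have hnotmem : n0 ∉ S := by
      intro h
      exact hnw (h e0 he0eff (by omega))
    have hmem0 : (0 : ℕ) ∈ S := by
      intro e he hdeg
      have : e = 0 := effective_deg_zero he (by simpa using hdeg)
      rw [this]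
      simpa using hw
    have hbound : ∀ s ∈ S, s ≤ n0 - 1 := by
      intro s hs
      by_contra h
      have hle : n0 ≤ s := by omega
      apply hnotmem
      intro e he hdeg
      have hwin : G.Winnable (d - (e + fun x => ((s - n0 : ℕ) : ℤ) * one (Sum.inl v1 : V1 ⊕ V2) x)) := by
        apply hs
        · intro x
          have h2 := he x
          have h1 : (0 : ℤ) ≤ one (Sum.inl v1 : V1 ⊕ V2) x := by unfold one; split <;> norm_num
          have h3 := mul_nonneg (Int.natCast_nonneg (s - n0)) h1
          simp only [Pi.add_apply]
          linarith
        · have hone : deg (fun x => ((s - n0 : ℕ) : ℤ) * one (Sum.inl v1 : V1 ⊕ V2) x)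
              = ((s - n0 : ℕ) : ℤ) := by
            simp [deg, one, ← Finset.mul_sum, Finset.sum_ite_eq']
          rw [deg_add, hone, hdeg]
          push_cast [Nat.cast_sub hle]
          ring
      have : d - e = (d - (e + fun x => ((s - n0 : ℕ) : ℤ) * one (Sum.inl v1 : V1 ⊕ V2) x))
          + fun x => ((s - n0 : ℕ) : ℤ) * one (Sum.inl v1 : V1 ⊕ V2) x := by
        funext x; simp; ring
      rw [this]
      apply winnable_add_effective hwin
      intro x
      have h1 : (0 : ℤ) ≤ one (Sum.inl v1 : V1 ⊕ V2) x := by unfold one; split <;> norm_num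
      exact mul_nonneg (Int.natCast_nonneg (s - n0)) h1
    have hsup : sSup S ≤ n0 - 1 := csSup_le ⟨0, hmem0⟩ hbound
    have : ((sSup S : ℕ) : ℤ) ≤ ((n0 - 1 : ℕ) : ℤ) := by exact_mod_cast hsup
    have hc : ((n0 - 1 : ℕ) : ℤ) = r1 + r2 + 1 := by
      rw [Nat.cast_sub hn0pos]; omega
    omega
  · rw [MultiGraph.rank, if_neg hw]
    omega

end BN
end
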